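/- Let σ, r, η, α : [0,1] → ℝ be functions such that σ is antitone, η is continuous and positive, the product t ↦ η(t)·r(t) is antitone, and α is continuously differentiable. Assume that for all t₁, t₂ ∈ [0,1]: r(t₂)·(σ(t₁) − σ(t₂)) ≤ α(t₂) − α(t₁) ≤ r(t₁)·(σ(t₁) − σ(t₂)). Then for all 0 ≤ t₁ ≤ t₂ ≤ 1: η(t₂)·r(t₂)·(σ(t₁) − σ(t₂)) ≤ ∫_{t₁}^{t₂} η(ξ)·α'(ξ) dξ ≤ η(t₁)·r(t₁)·(σ(t₁) − σ(t₂)). -/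

import Mathlib

open Set intervalIntegral MeasureTheory Finset

private lemma ftc_sub (α α' : ℝ → ℝ)
    (hα : ∀ t ∈ Icc (0:ℝ) 1, HasDerivWithinAt α (α' t) (Icc 0 1) t)
    (hα' : ContinuousOn α' (Icc 0 1))
    {a b : ℝ} (ha : 0 ≤ a) (hab : a ≤ b) (hb : b ≤ 1) :
    ∫ x in a..b, α' x = α b - α a := by
  have hsub : Icc a b ⊆ Icc (0:ℝ) 1 := Icc_subset_Icc ha hb
  apply intervalIntegral.integral_eq_sub_of_hasDeriv_right_of_le hab
  · exact fun t ht => ((hα t (hsub ht)).continuousWithinAt).mono hsub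
  · intro x hx
    have hx01 : x ∈ Ioo (0:ℝ) 1 := ⟨lt_of_le_of_lt ha hx.1, lt_of_lt_of_le hx.2 hb⟩
    exact ((hα x (Ioo_subset_Icc_self hx01)).hasDerivAt
      (Icc_mem_nhds hx01.1 hx01.2)).hasDerivWithinAt
  · exact (hα'.mono hsub).intervalIntegrable_of_Icc hab

private lemma aux_eps (σ r η α α' : ℝ → ℝ)
    (hσ : AntitoneOn σ (Icc 0 1))
    (hηcont : ContinuousOn η (Icc 0 1))
    (hηpos : ∀ t ∈ Icc (0:ℝ) 1, 0 < η t)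
    (hηr : AntitoneOn (fun t => η t * r t) (Icc 0 1))
    (hα : ∀ t ∈ Icc (0:ℝ) 1, HasDerivWithinAt α (α' t) (Icc 0 1) t)
    (hα' : ContinuousOn α' (Icc 0 1))
    (hineq : ∀ t₁ ∈ Icc (0:ℝ) 1, ∀ t₂ ∈ Icc (0:ℝ) 1,
      r t₂ * (σ t₁ - σ t₂) ≤ α t₂ - α t₁ ∧ α t₂ - α t₁ ≤ r t₁ * (σ t₁ - σ t₂))
    (t₁ t₂ : ℝ) (ht₁ : 0 ≤ t₁) (hlt : t₁ < t₂) (ht₂ : t₂ ≤ 1)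
    (ε : ℝ) (hε : 0 < ε) :
    η t₂ * r t₂ * (σ t₁ - σ t₂) ≤ (∫ ξ in t₁..t₂, η ξ * α' ξ) + ε ∧
    (∫ ξ in t₁..t₂, η ξ * α' ξ) ≤ η t₁ * r t₁ * (σ t₁ - σ t₂) + ε := by
  have ht₁m : t₁ ∈ Icc (0:ℝ) 1 := ⟨ht₁, hlt.le.trans ht₂⟩
  have ht₂m : t₂ ∈ Icc (0:ℝ) 1 := ⟨ht₁.trans hlt.le, ht₂⟩
  obtain ⟨C, hCdef⟩ : ∃ C, C = ∫ ξ in t₁..t₂, |α' ξ| := ⟨_, rfl⟩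
  have hC0 : 0 ≤ C := hCdef ▸ intervalIntegral.integral_nonneg hlt.le (fun _ _ => abs_nonneg _)
  obtain ⟨ε', hε'def⟩ : ∃ e, e = ε / (C + 1) := ⟨_, rfl⟩
  have hε' : 0 < ε' := hε'def ▸ div_pos hε (by linarith)
  -- uniform continuity
  obtain ⟨δ, hδ0, hδ⟩ := Metric.uniformContinuousOn_iff.mp
    (isCompact_Icc.uniformContinuousOn_of_continuous hηcont) ε' hε'
  -- choose n
  obtain ⟨n, hn⟩ := exists_nat_gt ((t₂ - t₁) / δ)
  have hn0 : 0 < (n:ℝ) := lt_trans (div_pos (by linarith) hδ0) hn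
  have hnn : n ≠ 0 := Nat.cast_ne_zero.mp hn0.ne'
  obtain ⟨g, hgdef⟩ : ∃ g : ℝ, g = (t₂ - t₁) / n := ⟨_, rfl⟩
  have hgap0 : 0 < g := hgdef ▸ div_pos (by linarith) hn0
  have hgapδ : g < δ := by
    rw [hgdef, div_lt_iff₀ hn0]
    rw [div_lt_iff₀ hδ0] at hn
    linarith
  have hng : (n : ℝ) * g = t₂ - t₁ := by
    rw [hgdef]; field_simp
  obtain ⟨s, hsdef⟩ : ∃ s : ℕ → ℝ, ∀ i : ℕ, s i = t₁ + (i:ℝ) * g :=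
    ⟨fun i => t₁ + (i:ℝ) * g, fun _ => rfl⟩
  have hs0 : s 0 = t₁ := by rw [hsdef 0]; simp
  have hsn : s n = t₂ := by rw [hsdef n, hng]; ring
  have hstep : ∀ i, s (i + 1) - s i = g := by
    intro i; rw [hsdef (i+1), hsdef i]; push_cast; ring
  have hsmono : ∀ i j : ℕ, i ≤ j → s i ≤ s j := by
    intro i j hij
    rw [hsdef i, hsdef j]
    have : (i:ℝ) ≤ j := Nat.cast_le.mpr hij
    nlinarith [hgap0]
  have hsmem : ∀ i ≤ n, s i ∈ Icc (0:ℝ) 1 := by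
    intro i hi
    constructor
    · have := hsmono 0 i (Nat.zero_le i); rw [hs0] at this; linarith
    · have := hsmono i n hi; rw [hsn] at this; linarith
  -- integrability helpers
  have hint : ∀ f : ℝ → ℝ, ContinuousOn f (Icc 0 1) → ∀ a b : ℝ, a ∈ Icc (0:ℝ) 1 →
      b ∈ Icc (0:ℝ) 1 → a ≤ b → IntervalIntegrable f volume a b := by
    intro f hf a b ha hb hab
    exact (hf.mono (Icc_subset_Icc ha.1 hb.2)).intervalIntegrable_of_Icc hab
  have hηα' : ContinuousOn (fun ξ => η ξ * α' ξ) (Icc 0 1) := hηcont.mul hα'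
  have habs : ContinuousOn (fun ξ => |α' ξ|) (Icc 0 1) := hα'.abs
  -- splitting
  have hsplit : ∑ i ∈ range n, ∫ ξ in s i..s (i+1), η ξ * α' ξ
      = ∫ ξ in t₁..t₂, η ξ * α' ξ := by
    rw [← hs0, ← hsn]
    exact intervalIntegral.sum_integral_adjacent_intervals (fun k hk =>
      hint _ hηα' _ _ (hsmem k (le_of_lt hk)) (hsmem (k+1) hk) (hsmono k (k+1) (Nat.le_succ k)))
  have hsplitabs : ∑ i ∈ range n, ∫ ξ in s i..s (i+1), |α' ξ| = C := by
    rw [hCdef, ← hs0, ← hsn]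
    exact intervalIntegral.sum_integral_adjacent_intervals (fun k hk =>
      hint _ habs _ _ (hsmem k (le_of_lt hk)) (hsmem (k+1) hk) (hsmono k (k+1) (Nat.le_succ k)))
  -- closeness of η on each piece
  have hclose : ∀ i < n, ∀ p ∈ ({i, i+1} : Finset ℕ), ∀ ξ ∈ Icc (s i) (s (i+1)),
      |η ξ - η (s p)| < ε' := by
    intro i hi p hp ξ hξ
    have hip : i ≤ p ∧ p ≤ i + 1 := by
      simp only [Finset.mem_insert, Finset.mem_singleton] at hp
      omega
    have hpn : p ≤ n := by omega
    have hξm : ξ ∈ Icc (0:ℝ) 1 := by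
      have h1 := (hsmem i hi.le).1
      have h2 := (hsmem (i+1) hi).2
      exact ⟨h1.trans hξ.1, hξ.2.trans h2⟩
    have hsp1 : s i ≤ s p := hsmono i p hip.1
    have hsp2 : s p ≤ s (i+1) := hsmono p (i+1) hip.2
    have hst := hstep i
    have hd : dist ξ (s p) < δ := by
      rw [Real.dist_eq, abs_lt]
      constructor
      · linarith [hξ.1, hξ.2]
      · linarith [hξ.1, hξ.2]
    have := hδ ξ hξm (s p) (hsmem p hpn) hd
    rwa [Real.dist_eq] at this
  -- per-piece estimates
  have piece : ∀ i < n,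
      (∫ ξ in s i..s (i+1), η ξ * α' ξ)
        ≤ η (s i) * (α (s (i+1)) - α (s i)) + ε' * ∫ ξ in s i..s (i+1), |α' ξ| ∧
      η (s (i+1)) * (α (s (i+1)) - α (s i)) - ε' * (∫ ξ in s i..s (i+1), |α' ξ|)
        ≤ ∫ ξ in s i..s (i+1), η ξ * α' ξ := by
    intro i hi
    have hab : s i ≤ s (i+1) := hsmono i (i+1) (Nat.le_succ i)
    have ham : s i ∈ Icc (0:ℝ) 1 := hsmem i hi.le
    have hbm : s (i+1) ∈ Icc (0:ℝ) 1 := hsmem (i+1) hi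
    have hftc : ∫ ξ in s i..s (i+1), α' ξ = α (s (i+1)) - α (s i) :=
      ftc_sub α α' hα hα' ham.1 hab hbm.2
    have int1 : IntervalIntegrable (fun ξ => η ξ * α' ξ) volume (s i) (s (i+1)) :=
      hint _ hηα' _ _ ham hbm hab
    have intα' : IntervalIntegrable α' volume (s i) (s (i+1)) := hint _ hα' _ _ ham hbm hab
    have intabs : IntervalIntegrable (fun ξ => |α' ξ|) volume (s i) (s (i+1)) :=
      hint _ habs _ _ ham hbm hab
    constructor
    · have hpt : ∀ ξ ∈ Icc (s i) (s (i+1)), η ξ * α' ξ ≤ η (s i) * α' ξ + ε' * |α' ξ| := by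
        intro ξ hξ
        have h1 : |η ξ - η (s i)| < ε' := hclose i hi i (by simp) ξ hξ
        have h2 : (η ξ - η (s i)) * α' ξ ≤ ε' * |α' ξ| := by
          calc (η ξ - η (s i)) * α' ξ ≤ |(η ξ - η (s i)) * α' ξ| := le_abs_self _
            _ = |η ξ - η (s i)| * |α' ξ| := abs_mul _ _
            _ ≤ ε' * |α' ξ| := mul_le_mul_of_nonneg_right h1.le (abs_nonneg _)
        linarith
      have hmono := intervalIntegral.integral_mono_on hab int1
        ((intα'.const_mul _).add (intabs.const_mul _)) hpt
      rw [intervalIntegral.integral_add (intα'.const_mul _) (intabs.const_mul _),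
        intervalIntegral.integral_const_mul, intervalIntegral.integral_const_mul, hftc] at hmono
      exact hmono
    · have hpt : ∀ ξ ∈ Icc (s i) (s (i+1)), η (s (i+1)) * α' ξ - ε' * |α' ξ| ≤ η ξ * α' ξ := by
        intro ξ hξ
        have h1 : |η ξ - η (s (i+1))| < ε' := hclose i hi (i+1) (by simp) ξ hξ
        have h2 : (η (s (i+1)) - η ξ) * α' ξ ≤ ε' * |α' ξ| := by
          calc (η (s (i+1)) - η ξ) * α' ξ ≤ |(η (s (i+1)) - η ξ) * α' ξ| := le_abs_self _
            _ = |η (s (i+1)) - η ξ| * |α' ξ| := abs_mul _ _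
            _ ≤ ε' * |α' ξ| := by
                rw [abs_sub_comm]
                exact mul_le_mul_of_nonneg_right h1.le (abs_nonneg _)
        linarith
      have hmono := intervalIntegral.integral_mono_on hab
        ((intα'.const_mul _).sub (intabs.const_mul _)) int1 hpt
      rw [intervalIntegral.integral_sub (intα'.const_mul _) (intabs.const_mul _),
        intervalIntegral.integral_const_mul, intervalIntegral.integral_const_mul, hftc] at hmono
      exact hmono
  -- σ differences nonneg
  have hd : ∀ i < n, 0 ≤ σ (s i) - σ (s (i+1)) := by
    intro i hi
    have := hσ (hsmem i hi.le) (hsmem (i+1) hi) (hsmono i (i+1) (Nat.le_succ i))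
    linarith
  have hεC : ε' * C ≤ ε := by
    rw [hε'def, div_mul_eq_mul_div, div_le_iff₀ (by linarith : (0:ℝ) < C + 1)]
    nlinarith
  constructor
  · -- lower bound
    have step1 : ∀ i < n, η t₂ * r t₂ * (σ (s i) - σ (s (i+1)))
        ≤ η (s (i+1)) * (α (s (i+1)) - α (s i)) := by
      intro i hi
      have ham : s i ∈ Icc (0:ℝ) 1 := hsmem i hi.le
      have hbm : s (i+1) ∈ Icc (0:ℝ) 1 := hsmem (i+1) hi
      have h1 : r (s (i+1)) * (σ (s i) - σ (s (i+1))) ≤ α (s (i+1)) - α (s i) :=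
        (hineq (s i) ham (s (i+1)) hbm).1
      have h2 : η t₂ * r t₂ ≤ η (s (i+1)) * r (s (i+1)) := hηr hbm ht₂m (by
        have := hsmono (i+1) n hi; rwa [hsn] at this)
      have h3 := mul_le_mul_of_nonneg_right h2 (hd i hi)
      have h4 := mul_le_mul_of_nonneg_left h1 (hηpos _ hbm).le
      nlinarith
    calc η t₂ * r t₂ * (σ t₁ - σ t₂)
        = ∑ i ∈ range n, η t₂ * r t₂ * (σ (s i) - σ (s (i+1))) := by
          rw [← Finset.mul_sum, Finset.sum_range_sub' (fun i => σ (s i)), hs0, hsn]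
      _ ≤ ∑ i ∈ range n, η (s (i+1)) * (α (s (i+1)) - α (s i)) :=
          Finset.sum_le_sum (fun i hi => step1 i (Finset.mem_range.mp hi))
      _ = ∑ i ∈ range n, (η (s (i+1)) * (α (s (i+1)) - α (s i))
            - ε' * (∫ ξ in s i..s (i+1), |α' ξ|)) + ε' * C := by
          rw [Finset.sum_sub_distrib, ← Finset.mul_sum, hsplitabs]; ring
      _ ≤ ∑ i ∈ range n, (∫ ξ in s i..s (i+1), η ξ * α' ξ) + ε' * C :=
          add_le_add_left (Finset.sum_le_sum
            (fun i hi => (piece i (Finset.mem_range.mp hi)).2)) _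
      _ ≤ (∫ ξ in t₁..t₂, η ξ * α' ξ) + ε := by rw [hsplit]; linarith
  · -- upper bound
    have step1 : ∀ i < n, η (s i) * (α (s (i+1)) - α (s i))
        ≤ η t₁ * r t₁ * (σ (s i) - σ (s (i+1))) := by
      intro i hi
      have ham : s i ∈ Icc (0:ℝ) 1 := hsmem i hi.le
      have hbm : s (i+1) ∈ Icc (0:ℝ) 1 := hsmem (i+1) hi
      have h1 : α (s (i+1)) - α (s i) ≤ r (s i) * (σ (s i) - σ (s (i+1))) :=
        (hineq (s i) ham (s (i+1)) hbm).2
      have h2 : η (s i) * r (s i) ≤ η t₁ * r t₁ := hηr ht₁m ham (by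
        have := hsmono 0 i (Nat.zero_le i); rwa [hs0] at this)
      have h3 := mul_le_mul_of_nonneg_right h2 (hd i hi)
      have h4 := mul_le_mul_of_nonneg_left h1 (hηpos _ ham).le
      nlinarith
    calc (∫ ξ in t₁..t₂, η ξ * α' ξ)
        = ∑ i ∈ range n, ∫ ξ in s i..s (i+1), η ξ * α' ξ := hsplit.symm
      _ ≤ ∑ i ∈ range n, (η (s i) * (α (s (i+1)) - α (s i))
            + ε' * (∫ ξ in s i..s (i+1), |α' ξ|)) :=
          Finset.sum_le_sum (fun i hi => (piece i (Finset.mem_range.mp hi)).1)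
      _ = ∑ i ∈ range n, η (s i) * (α (s (i+1)) - α (s i)) + ε' * C := by
          rw [Finset.sum_add_distrib, ← Finset.mul_sum, hsplitabs]
      _ ≤ ∑ i ∈ range n, η t₁ * r t₁ * (σ (s i) - σ (s (i+1))) + ε' * C :=
          add_le_add_left (Finset.sum_le_sum
            (fun i hi => step1 i (Finset.mem_range.mp hi))) _
      _ ≤ η t₁ * r t₁ * (σ t₁ - σ t₂) + ε := by
          rw [← Finset.mul_sum, Finset.sum_range_sub' (fun i => σ (s i)), hs0, hsn]
          linarith

/-- Weighted support-line inequalities (Lemma 6 of the paper): if `σ` is antitone on `[0,1]`,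
`η` is continuous and positive, `t ↦ η t * r t` is antitone, `α` is continuously
differentiable (with derivative `α'`), and the support-line inequalities
`r(t₂)·(σ(t₁) − σ(t₂)) ≤ α(t₂) − α(t₁) ≤ r(t₁)·(σ(t₁) − σ(t₂))` hold, then
`η(t₂)·r(t₂)·(σ(t₁) − σ(t₂)) ≤ ∫_{t₁}^{t₂} η·α' ≤ η(t₁)·r(t₁)·(σ(t₁) − σ(t₂))`
for `0 ≤ t₁ ≤ t₂ ≤ 1`. -/
theorem weighted_support_line_inequalities
    (σ r η α α' : ℝ → ℝ)
    (hσ : AntitoneOn σ (Icc 0 1))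
    (hηcont : ContinuousOn η (Icc 0 1))
    (hηpos : ∀ t ∈ Icc (0:ℝ) 1, 0 < η t)
    (hηr : AntitoneOn (fun t => η t * r t) (Icc 0 1))
    (hα : ∀ t ∈ Icc (0:ℝ) 1, HasDerivWithinAt α (α' t) (Icc 0 1) t)
    (hα' : ContinuousOn α' (Icc 0 1))
    (hineq : ∀ t₁ ∈ Icc (0:ℝ) 1, ∀ t₂ ∈ Icc (0:ℝ) 1,
      r t₂ * (σ t₁ - σ t₂) ≤ α t₂ - α t₁ ∧ α t₂ - α t₁ ≤ r t₁ * (σ t₁ - σ t₂)) :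
    ∀ t₁ t₂ : ℝ, 0 ≤ t₁ → t₁ ≤ t₂ → t₂ ≤ 1 →
      η t₂ * r t₂ * (σ t₁ - σ t₂) ≤ (∫ ξ in t₁..t₂, η ξ * α' ξ) ∧
      (∫ ξ in t₁..t₂, η ξ * α' ξ) ≤ η t₁ * r t₁ * (σ t₁ - σ t₂) := by
  intro t₁ t₂ ht₁ ht ht₂
  rcases eq_or_lt_of_le ht with rfl | hlt
  · simp
  constructor
  · exact le_of_forall_pos_le_add (fun ε hε =>
      (aux_eps σ r η α α' hσ hηcont hηpos hηr hα hα' hineq t₁ t₂ ht₁ hlt ht₂ ε hε).1)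
  · exact le_of_forall_pos_le_add (fun ε hε =>
      (aux_eps σ r η α α' hσ hηcont hηpos hηr hα hα' hineq t₁ t₂ ht₁ hlt ht₂ ε hε).2)
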